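/- Let F be a family of m subsets of [n] such that for every nonempty Z ⊆ [n] some member of F intersects Z in exactly one element. Then 2^m ≥ n, i.e., m ≥ log₂ n. -/
import Mathlib


theorem stmt_4 (n m : ℕ) (F : Fin m → Finset (Fin n))
    (hF : ∀ Z : Finset (Fin n), Z.Nonempty → ∃ j : Fin m, (Z ∩ F j).card = 1) :
    n ≤ 2 ^ m := by
  have hinj : Function.Injective (fun (x : Fin n) (j : Fin m) => decide (x ∈ F j)) := by
    intro x y hxy
    by_contra hne
    obtain ⟨j, hj⟩ := hF {x, y} ⟨x, by simp⟩
    have hmem : x ∈ F j ↔ y ∈ F j := by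
      have := congrFun hxy j
      simpa using this
    by_cases hx : x ∈ F j
    · have hy := hmem.mp hx
      have : ({x, y} : Finset (Fin n)) ∩ F j = {x, y} := by
        apply Finset.inter_eq_left.mpr
        intro z hz
        simp at hz
        rcases hz with h | h <;> subst h <;> assumption
      rw [this, Finset.card_insert_of_notMem (by simpa using hne)] at hj
      simp at hj
    · have hy := fun h => hx (hmem.mpr h)
      have : ({x, y} : Finset (Fin n)) ∩ F j = ∅ := by
        apply Finset.eq_empty_iff_forall_notMem.mpr
        intro z hz
        simp at hz
        rcases hz.1 with h | h <;> subst h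
        · exact hx hz.2
        · exact hy hz.2
      rw [this] at hj
      simp at hj
  calc n = Fintype.card (Fin n) := (Fintype.card_fin n).symm
    _ ≤ Fintype.card (Fin m → Bool) := Fintype.card_le_of_injective _ hinj
    _ = 2 ^ m := by simp
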